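/- Let α, β ∈ R, σ ∈ V⁰, and let k, m be positive integers with α + kσ ∈ R and β + mσ ∈ R. Assume a := (m/k)·(α, β^∨) is an integer. Then in Ŵ one has ŵ_α · t̂_β^{mσ} · ŵ_α = t̂_β^{mσ} · (t̂_α^{kσ})^{−a}. -/

import Mathlib

/-- The reflection `s_α(u) = u - (u, α^∨) α` associated to a vector `α`, where
`α^∨ = 2α/(α,α)` and `B` is the bilinear form. -/
noncomputable def reflMap {V : Type*} [AddCommGroup V] [Module ℝ V] (B : V →ₗ[ℝ] V →ₗ[ℝ] ℝ)
    (α : V) : V → V :=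
  fun u => u - ((2 * B u α) / B α α) • α

/-- The defining relations of the presented group `Ŵ`: (I) `ŵ_α² = 1` and
(II) `ŵ_α ŵ_β ŵ_α = ŵ_{s_α(β)}` for `α, β ∈ R`. -/
def eawRels {V : Type*} [AddCommGroup V] [Module ℝ V] (B : V →ₗ[ℝ] V →ₗ[ℝ] ℝ)
    (R : Set V) : Set (FreeGroup R) :=
  {r | ∃ α : R, r = FreeGroup.of α * FreeGroup.of α} ∪
  {r | ∃ α β γ : R, (γ : V) = reflMap B (α : V) (β : V) ∧
        r = FreeGroup.of α * FreeGroup.of β * FreeGroup.of α * (FreeGroup.of γ)⁻¹}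

/-- The group `Ŵ` presented by generators `ŵ_α` (`α ∈ R`) and relations (I), (II). -/
abbrev EAW {V : Type*} [AddCommGroup V] [Module ℝ V] (B : V →ₗ[ℝ] V →ₗ[ℝ] ℝ)
    (R : Set V) :=
  PresentedGroup (eawRels B R)

/-- The generator `ŵ_α` of `Ŵ`. -/
def wgen {V : Type*} [AddCommGroup V] [Module ℝ V] (B : V →ₗ[ℝ] V →ₗ[ℝ] ℝ)
    (R : Set V) (α : V) (hα : α ∈ R) : EAW B R :=
  PresentedGroup.of (⟨α, hα⟩ : R)

section Aux
variable {V : Type*} [AddCommGroup V] [Module ℝ V] (B : V →ₗ[ℝ] V →ₗ[ℝ] ℝ) (R : Set V)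

theorem wgen_congr {u v : V} (h : u = v) (hu : u ∈ R) (hv : v ∈ R) :
    wgen B R u hu = wgen B R v hv := by subst h; rfl

theorem wgen_sq (v : V) (hv : v ∈ R) : wgen B R v hv * wgen B R v hv = 1 := by
  have h : (FreeGroup.of (⟨v, hv⟩ : R) * FreeGroup.of (⟨v, hv⟩ : R)) ∈ eawRels B R :=
    Or.inl ⟨⟨v, hv⟩, rfl⟩
  have := (QuotientGroup.eq_one_iff _).mpr (Subgroup.subset_normalClosure h)
  simp only [wgen, PresentedGroup.of]; rw [← map_mul]; exact this

theorem wgen_braid (u v : V) (hu : u ∈ R) (hv : v ∈ R) (hw : reflMap B u v ∈ R) :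
    wgen B R u hu * wgen B R v hv * wgen B R u hu = wgen B R (reflMap B u v) hw := by
  have h : (FreeGroup.of (⟨u, hu⟩ : R) * FreeGroup.of (⟨v, hv⟩ : R) * FreeGroup.of (⟨u, hu⟩ : R)
      * (FreeGroup.of (⟨reflMap B u v, hw⟩ : R))⁻¹) ∈ eawRels B R :=
    Or.inr ⟨⟨u, hu⟩, ⟨v, hv⟩, ⟨reflMap B u v, hw⟩, rfl, rfl⟩
  have h2 := (QuotientGroup.eq_one_iff _).mpr (Subgroup.subset_normalClosure h)
  have h3 : (PresentedGroup.mk (eawRels B R)) (FreeGroup.of (⟨u, hu⟩ : R) * FreeGroup.of ⟨v, hv⟩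
      * FreeGroup.of ⟨u, hu⟩ * (FreeGroup.of (⟨reflMap B u v, hw⟩ : R))⁻¹) = 1 := h2
  rw [map_mul, map_mul, map_mul, map_inv, mul_inv_eq_one] at h3
  exact h3

theorem refl_self (v : V) (hvv : B v v ≠ 0) : reflMap B v v = -v := by
  rw [reflMap, mul_div_assoc, div_self hvv, mul_one, two_smul]
  abel

theorem neg_mem (hnon : ∀ α ∈ R, B α α ≠ 0)
    (hclos : ∀ α ∈ R, ∀ β ∈ R, reflMap B α β ∈ R) (v : V) (hv : v ∈ R) : -v ∈ R := by
  have := hclos v hv v hv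
  rwa [refl_self B v (hnon v hv)] at this

theorem wgen_neg (hnon : ∀ α ∈ R, B α α ≠ 0)
    (hclos : ∀ α ∈ R, ∀ β ∈ R, reflMap B α β ∈ R) (v : V) (hv : v ∈ R) (hv' : -v ∈ R) :
    wgen B R (-v) hv' = wgen B R v hv := by
  have hb := wgen_braid B R v v hv hv (hclos v hv v hv)
  rw [wgen_congr B R (refl_self B v (hnon v hv)) _ hv'] at hb
  rw [← hb, mul_assoc, wgen_sq, mul_one]

end Aux

/-- The element `t̂_α^σ = ŵ_{α+σ} ŵ_α` of `Ŵ`. -/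
def tgen {V : Type*} [AddCommGroup V] [Module ℝ V] (B : V →ₗ[ℝ] V →ₗ[ℝ] ℝ)
    (R : Set V) (α σ : V) (hα : α ∈ R) (hασ : α + σ ∈ R) : EAW B R :=
  wgen B R (α + σ) hασ * wgen B R α hα

section Rad
variable {V : Type*} [AddCommGroup V] [Module ℝ V] (B : V →ₗ[ℝ] V →ₗ[ℝ] ℝ) (R : Set V)

open Classical in
/-- Total version of `wgen`. -/
noncomputable def Wf (v : V) : EAW B R := if h : v ∈ R then wgen B R v h else 1

theorem Wf_eq {v : V} (h : v ∈ R) : Wf B R v = wgen B R v h := by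
  rw [Wf, dif_pos h]

variable (hsym : ∀ u v : V, B u v = B v u)
  (hnon : ∀ α ∈ R, B α α ≠ 0)
  (hclos : ∀ α ∈ R, ∀ β ∈ R, reflMap B α β ∈ R)

include hnon hclos

theorem Wf_sq {v : V} (hv : v ∈ R) : Wf B R v * Wf B R v = 1 := by
  rw [Wf_eq B R hv]; exact wgen_sq B R v hv

theorem Wf_braid {u v : V} (hu : u ∈ R) (hv : v ∈ R) :
    Wf B R u * Wf B R v * Wf B R u = Wf B R (reflMap B u v) := by
  rw [Wf_eq B R hu, Wf_eq B R hv, Wf_eq B R (hclos u hu v hv)]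
  exact wgen_braid B R u v hu hv _

theorem Wf_neg_mem {v : V} (hv : v ∈ R) : -v ∈ R :=
  neg_mem B R hnon hclos v hv

theorem Wf_neg {v : V} (hv : v ∈ R) : Wf B R (-v) = Wf B R v := by
  rw [Wf_eq B R hv, Wf_eq B R (Wf_neg_mem B R hnon hclos hv)]
  exact wgen_neg B R hnon hclos v hv _

variable (τ : V) (hτ : ∀ u : V, B τ u = 0)
include hsym hτ

theorem mem_step_up {x : V} (hx : x ∈ R) (hxt : x + τ ∈ R) : x + τ + τ ∈ R := by
  have hτ' : ∀ u : V, B u τ = 0 := fun u => by rw [hsym]; exact hτ u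
  have h := hclos (x + τ) hxt x hx
  have hrefl : reflMap B (x + τ) x = -(x + τ + τ) := by
    rw [reflMap]
    have h1 : B x (x + τ) = B x x := by simp [hτ']
    have h2 : B (x + τ) (x + τ) = B x x := by simp [hτ, hτ']
    rw [h1, h2, mul_div_assoc, div_self (hnon x hx), mul_one, two_smul]
    abel
  rw [hrefl] at h
  simpa using Wf_neg_mem B R hnon hclos h

theorem mem_step_down {x : V} (hx : x ∈ R) (hxt : x + τ ∈ R) : x - τ ∈ R := by
  have hτ' : ∀ u : V, B u τ = 0 := fun u => by rw [hsym]; exact hτ u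
  have h := hclos x hx (x + τ) hxt
  have hrefl : reflMap B x (x + τ) = -(x - τ) := by
    rw [reflMap]
    have h1 : B (x + τ) x = B x x := by simp [hτ]
    rw [h1, mul_div_assoc, div_self (hnon x hx), mul_one, two_smul]
    abel
  rw [hrefl] at h
  simpa using Wf_neg_mem B R hnon hclos h

theorem mem_zsmul {γ : V} (hγ : γ ∈ R) (hγτ : γ + τ ∈ R) (n : ℤ) : γ + n • τ ∈ R := by
  have key : ∀ n : ℤ, γ + n • τ ∈ R ∧ γ + (n + 1) • τ ∈ R := by
    intro n
    induction n using Int.induction_on with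
    | zero => simpa using ⟨hγ, hγτ⟩
    | succ n ih =>
      refine ⟨ih.2, ?_⟩
      have h1 : γ + (n:ℤ) • τ + τ ∈ R := by
        rw [show γ + (n:ℤ) • τ + τ = γ + ((n:ℤ)+1) • τ by module]; exact ih.2
      have := mem_step_up B R hsym hnon hclos τ hτ ih.1 h1
      rwa [show γ + (n:ℤ) • τ + τ + τ = γ + ((n:ℤ)+1+1) • τ by module] at this
    | pred n ih =>
      refine ⟨?_, by simpa using ih.1⟩
      have h1 : γ + (-(n:ℤ)) • τ + τ ∈ R := by
        rw [show γ + (-(n:ℤ)) • τ + τ = γ + (-(n:ℤ)+1) • τ by module]; exact ih.2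
      have := mem_step_down B R hsym hnon hclos τ hτ ih.1 h1
      rwa [show γ + (-(n:ℤ)) • τ - τ = γ + (-(n:ℤ)-1) • τ by module] at this
  exact (key n).1

theorem Wf_shift_one {x : V} (hx : x ∈ R) (hxt : x + τ ∈ R) :
    Wf B R (x + τ + τ) * Wf B R (x + τ) = Wf B R (x + τ) * Wf B R x := by
  have hτ' : ∀ u : V, B u τ = 0 := fun u => by rw [hsym]; exact hτ u
  have hxtt := mem_step_up B R hsym hnon hclos τ hτ hx hxt
  have hb := Wf_braid B R hnon hclos hxt hxtt
  have hrefl : reflMap B (x + τ) (x + τ + τ) = -x := by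
    rw [reflMap]
    have h1 : B (x + τ + τ) (x + τ) = B x x := by simp [hτ, hτ']
    have h2 : B (x + τ) (x + τ) = B x x := by simp [hτ, hτ']
    rw [h1, h2, mul_div_assoc, div_self (hnon x hx), mul_one, two_smul]
    abel
  rw [hrefl, Wf_neg B R hnon hclos hx] at hb
  calc Wf B R (x + τ + τ) * Wf B R (x + τ)
      = Wf B R (x+τ) * (Wf B R (x+τ) * Wf B R (x + τ + τ) * Wf B R (x + τ)) := by
        rw [← mul_assoc, ← mul_assoc, Wf_sq B R hnon hclos hxt, one_mul]
    _ = Wf B R (x + τ) * Wf B R x := by rw [hb]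

theorem Wf_shift {γ : V} (hγ : γ ∈ R) (hγτ : γ + τ ∈ R) (n : ℤ) :
    Wf B R (γ + (n + 1) • τ) * Wf B R (γ + n • τ) = Wf B R (γ + τ) * Wf B R γ := by
  have hmem : ∀ j : ℤ, γ + j • τ ∈ R := mem_zsmul B R hsym hnon hclos τ hτ hγ hγτ
  induction n using Int.induction_on with
  | zero => rw [show γ + ((0:ℤ) + 1) • τ = γ + τ by module, show γ + (0:ℤ) • τ = γ by module]
  | succ n ih =>
    have step := Wf_shift_one B R hsym hnon hclos τ hτ (hmem n)
      (by rw [show γ + (n:ℤ) • τ + τ = γ + ((n:ℤ)+1) • τ by module]; exact hmem _)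
    rw [show γ + (n:ℤ) • τ + τ + τ = γ + ((n:ℤ)+1+1) • τ by module,
      show γ + (n:ℤ) • τ + τ = γ + ((n:ℤ)+1) • τ by module] at step
    rw [step]; exact ih
  | pred n ih =>
    have step := Wf_shift_one B R hsym hnon hclos τ hτ (hmem (-(n:ℤ)-1))
      (by rw [show γ + (-(n:ℤ)-1) • τ + τ = γ + (-(n:ℤ)) • τ by module]; exact hmem _)
    rw [show γ + (-(n:ℤ)-1) • τ + τ + τ = γ + (-(n:ℤ)+1) • τ by module,
      show γ + (-(n:ℤ)-1) • τ + τ = γ + (-(n:ℤ)) • τ by module] at step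
    rw [show (-(n:ℤ)-1+1) = -(n:ℤ) by ring, ← step]
    exact ih

theorem Wf_zpow {γ : V} (hγ : γ ∈ R) (hγτ : γ + τ ∈ R) (n : ℤ) :
    (Wf B R (γ + τ) * Wf B R γ) ^ n = Wf B R (γ + n • τ) * Wf B R γ := by
  have hmem : ∀ j : ℤ, γ + j • τ ∈ R := mem_zsmul B R hsym hnon hclos τ hτ hγ hγτ
  induction n using Int.induction_on with
  | zero => rw [zpow_zero, show γ + (0:ℤ) • τ = γ by module, Wf_sq B R hnon hclos hγ]
  | succ n ih =>
    have hsplit : (Wf B R (γ + τ) * Wf B R γ) ^ ((n:ℤ)+1)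
        = (Wf B R (γ + τ) * Wf B R γ) * (Wf B R (γ + τ) * Wf B R γ) ^ (n:ℤ) := by
      rw [show ((n:ℤ)+1) = 1 + (n:ℤ) by ring, zpow_add, zpow_one]
    rw [hsplit, ih, ← Wf_shift B R hsym hnon hclos τ hτ hγ hγτ n,
      mul_assoc, ← mul_assoc (Wf B R (γ + (n:ℤ) • τ)), Wf_sq B R hnon hclos (hmem n), one_mul]
  | pred n ih =>
    have sh := Wf_shift B R hsym hnon hclos τ hτ hγ hγτ (-(n:ℤ)-1)
    rw [show (-(n:ℤ)-1+1) = -(n:ℤ) by ring] at sh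
    have hsplit : (Wf B R (γ + τ) * Wf B R γ) ^ (-(n:ℤ)-1)
        = (Wf B R (γ + τ) * Wf B R γ)⁻¹ * (Wf B R (γ + τ) * Wf B R γ) ^ (-(n:ℤ)) := by
      rw [show (-(n:ℤ)-1) = -1 + (-(n:ℤ)) by ring, zpow_add, zpow_neg_one]
    have iW : ∀ (v : V), v ∈ R → (Wf B R v)⁻¹ = Wf B R v := fun v hv =>
      inv_eq_of_mul_eq_one_right (Wf_sq B R hnon hclos hv)
    have tinv : (Wf B R (γ + τ) * Wf B R γ)⁻¹
        = Wf B R (γ + (-(n:ℤ)-1) • τ) * Wf B R (γ + (-(n:ℤ)) • τ) := by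
      rw [← sh, mul_inv_rev, iW _ (hmem _), iW _ (hmem _)]
    rw [hsplit, ih, tinv, mul_assoc, ← mul_assoc (Wf B R (γ + (-(n:ℤ)) • τ)),
      Wf_sq B R hnon hclos (hmem _), one_mul]

end Rad

section Key
variable {V : Type*} [AddCommGroup V] [Module ℝ V] (B : V →ₗ[ℝ] V →ₗ[ℝ] ℝ)

theorem key_refl (hsym : ∀ u v : V, B u v = B v u) (σ : V) (hσ : ∀ u : V, B σ u = 0)
    (α β : V) (hββ : B β β ≠ 0) (t s : ℝ)
    (hts : t + s * (2 * B α β / B β β) = 0) :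
    reflMap B (β + s • σ) (reflMap B β (α + t • σ)) = α := by
  have hσ' : ∀ u : V, B u σ = 0 := fun u => by rw [hsym]; exact hσ u
  set c : ℝ := 2 * B α β / B β β with hc
  have e1 : reflMap B β (α + t • σ) = α + t • σ - c • β := by
    simp only [reflMap]
    have h1 : B (α + t • σ) β = B α β := by
      simp [map_add, LinearMap.add_apply, map_smul, LinearMap.smul_apply, hσ]
    rw [h1]
  rw [e1]
  simp only [reflMap]
  have h3 : B (β + s • σ) (β + s • σ) = B β β := by
    simp [map_add, LinearMap.add_apply, map_smul, LinearMap.smul_apply, hσ, hσ']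
  have h2 : B (α + t • σ - c • β) (β + s • σ) = B α β - c * B β β := by
    simp [map_add, map_sub, map_smul, LinearMap.add_apply, LinearMap.sub_apply,
      LinearMap.smul_apply, hσ, hσ', smul_eq_mul]
  have h4 : c * B β β = 2 * B α β := div_mul_cancel₀ _ hββ
  have h5 : 2 * B (α + t • σ - c • β) (β + s • σ) / B (β + s • σ) (β + s • σ) = -c := by
    rw [h2, h3, h4, hc]
    ring
  rw [h5]
  have ht : t = -(s * c) := by linarith
  rw [ht]
  module

end Key

/-- For `α, β ∈ R`, `σ` in the radical, positive integers `k, m` with `α + kσ ∈ R`,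
`β + mσ ∈ R`, and `a = (m/k)·(α, β^∨) ∈ ℤ`, one has
`ŵ_α · t̂_β^{mσ} · ŵ_α = t̂_β^{mσ} · (t̂_α^{kσ})^{−a}` in `Ŵ`. -/
theorem wgen_conj_tgen {V : Type*} [AddCommGroup V] [Module ℝ V]
    (B : V →ₗ[ℝ] V →ₗ[ℝ] ℝ) (R : Set V)
    (hsym : ∀ u v : V, B u v = B v u)
    (hpsd : ∀ v : V, 0 ≤ B v v)
    (hnon : ∀ α ∈ R, B α α ≠ 0)
    (hclos : ∀ α ∈ R, ∀ β ∈ R, reflMap B α β ∈ R)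
    (α β σ : V) (hα : α ∈ R) (hβ : β ∈ R) (hσ : ∀ u : V, B σ u = 0)
    (k m : ℕ) (hk : 0 < k) (hm : 0 < m)
    (hαk : α + k • σ ∈ R) (hβm : β + m • σ ∈ R)
    (a : ℤ) (ha : (a : ℝ) = ((m : ℝ) / (k : ℝ)) * (2 * B α β / B β β)) :
    wgen B R α hα * tgen B R β (m • σ) hβ hβm * wgen B R α hα =
      tgen B R β (m • σ) hβ hβm * (tgen B R α (k • σ) hα hαk) ^ (-a) := by

  have hββ : B β β ≠ 0 := hnon β hβ
  have hk' : (k:ℝ) ≠ 0 := Nat.cast_ne_zero.mpr hk.ne'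
  have hτk : ∀ u : V, B ((k:ℕ) • σ) u = 0 := by
    intro u
    rw [← Nat.cast_smul_eq_nsmul ℝ k σ, map_smul, LinearMap.smul_apply, hσ u, smul_zero]
  -- membership of α - (a k) σ
  have hx : α + (-(a * (k:ℤ))) • σ ∈ R := by
    have := mem_zsmul B R hsym hnon hclos ((k:ℕ) • σ) hτk hα hαk (-a)
    rwa [show α + (-a) • ((k:ℕ) • σ) = α + (-(a * (k:ℤ))) • σ by module] at this
  -- the key reflection identity
  have hts : ((-(a * (k:ℤ)) : ℤ) : ℝ) + (m:ℝ) * (2 * B α β / B β β) = 0 := by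
    push_cast
    rw [ha]
    field_simp
    ring
  have hrefl : reflMap B (β + (m:ℕ) • σ) (reflMap B β (α + (-(a * (k:ℤ))) • σ)) = α := by
    have := key_refl B hsym σ hσ α β hββ ((-(a * (k:ℤ)) : ℤ) : ℝ) (m:ℝ) hts
    rwa [Int.cast_smul_eq_zsmul, Nat.cast_smul_eq_nsmul] at this
  -- pass to the total function Wf
  simp only [tgen]
  rw [← Wf_eq B R hα, ← Wf_eq B R hβ, ← Wf_eq B R hβm, ← Wf_eq B R hαk,
    Wf_zpow B R hsym hnon hclos ((k:ℕ) • σ) hτk hα hαk (-a),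
    show α + (-a) • ((k:ℕ) • σ) = α + (-(a * (k:ℤ))) • σ by module]
  set Wα := Wf B R α
  set Wβ := Wf B R β
  set Wβm := Wf B R (β + (m:ℕ) • σ)
  set Wx := Wf B R (α + (-(a * (k:ℤ))) • σ)
  have can : ∀ (v : V), v ∈ R → ∀ g : EAW B R, Wf B R v * (Wf B R v * g) = g := fun v hv g => by
    rw [← mul_assoc, Wf_sq B R hnon hclos hv, one_mul]
  have E : Wβm * (Wβ * Wx * Wβ) * Wβm = Wα := by
    rw [Wf_braid B R hnon hclos hβ hx, Wf_braid B R hnon hclos hβm (hclos β hβ _ hx), hrefl]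
  have h : (Wβm * Wβ) * Wx = Wα * (Wβm * Wβ) := by
    calc (Wβm * Wβ) * Wx
        = (Wβm * (Wβ * Wx * Wβ) * Wβm) * (Wβm * Wβ) := by
          simp only [mul_assoc]
          rw [can _ hβm, Wf_sq B R hnon hclos hβ, mul_one]
      _ = Wα * (Wβm * Wβ) := by rw [E]
  calc Wα * (Wβm * Wβ) * Wα = ((Wβm * Wβ) * Wx) * Wα := by rw [h]
    _ = (Wβm * Wβ) * (Wx * Wα) := by rw [mul_assoc]
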